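/- arXiv:1306.5201 — 3 statements merged into one kernel-verified Lean document; each statement's English description precedes it below -/
import Mathlib

section
/- For y ∈ (-1, 1) and ε ∈ (0, 1-|y|), the remainder |2/√(1-(y/(1-ε))²) - 2/√(1-y²)| is bounded by C·ε·|y|/√(((1-ε)² - y²)³) for an absolute constant C (e.g. C = 2 works). -/
/-- Taylor remainder bound: comparing 2/√(1-(y/(1-ε))²) with 2/√(1-y²). -/
theorem dumbbell_taylor_remainder (y ε : ℝ) (hy : -1 < y) (hy1 : y < 1)
    (hε : 0 < ε) (hε1 : ε < 1 - |y|) :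
    |2 / Real.sqrt (1 - (y / (1 - ε)) ^ 2) - 2 / Real.sqrt (1 - y ^ 2)|
      ≤ 2 * ε * |y| / Real.sqrt (((1 - ε) ^ 2 - y ^ 2) ^ 3) := by
  set a : ℝ := 1 - ε with ha
  set m : ℝ := |y| with hm
  have hm0 : 0 ≤ m := abs_nonneg y
  have hma : m < a := by simp only [ha]; linarith
  have ha0 : 0 < a := lt_of_le_of_lt hm0 hma
  have ha1 : a < 1 := by simp only [ha]; linarith
  have hmsq : m ^ 2 = y ^ 2 := sq_abs y
  have hu0 : 0 < a ^ 2 - y ^ 2 := by nlinarith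
  have hv0 : 0 < 1 - y ^ 2 := by nlinarith
  set su : ℝ := Real.sqrt (a ^ 2 - y ^ 2) with hsu
  set sv : ℝ := Real.sqrt (1 - y ^ 2) with hsv
  have hsu0 : 0 < su := Real.sqrt_pos.mpr hu0
  have hsv0 : 0 < sv := Real.sqrt_pos.mpr hv0
  have hsu2 : su ^ 2 = a ^ 2 - y ^ 2 := Real.sq_sqrt hu0.le
  have hsv2 : sv ^ 2 = 1 - y ^ 2 := Real.sq_sqrt hv0.le
  have hle : su ≤ sv := Real.sqrt_le_sqrt (by nlinarith)
  -- rewrite first sqrt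
  have h1 : 1 - (y / a) ^ 2 = (a ^ 2 - y ^ 2) / a ^ 2 := by
    field_simp
  have h2 : Real.sqrt (1 - (y / a) ^ 2) = su / a := by
    rw [h1, Real.sqrt_div hu0.le, Real.sqrt_sq ha0.le]
  -- rewrite cube sqrt
  have h3 : Real.sqrt ((a ^ 2 - y ^ 2) ^ 3) = su ^ 3 := by
    rw [show (a ^ 2 - y ^ 2) ^ 3 = (su ^ 3) ^ 2 by rw [← hsu2]; ring]
    exact Real.sqrt_sq (by positivity)
  rw [h2, h3]
  clear_value a m su sv
  have hkey : (a * sv - su) * (a * sv + su) = ε * (1 + a) * m ^ 2 := by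
    have : ε = 1 - a := by simp [ha]
    rw [this]; nlinarith [hsu2, hsv2, hmsq]
  have hpos : 0 < a * sv + su := by positivity
  have hprod : 0 ≤ (a * sv - su) * (a * sv + su) := by
    rw [hkey]; positivity
  have hnum : 0 ≤ a * sv - su := by
    by_contra h
    push_neg at h
    nlinarith [mul_pos (neg_pos.mpr h) hpos]
  have hlhs : 2 / (su / a) - 2 / sv = (2 * (a * sv - su)) / (su * sv) := by
    field_simp
  rw [hlhs, abs_of_nonneg (by positivity)]
  rw [div_le_div_iff₀ (by positivity) (by positivity)]
  -- goal: 2*(a*sv-su) * su^3 ≤ 2*ε*m*(su*sv)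
  clear h1 h2 h3 hlhs hsu hsv ha hm hy hy1 hε1
  have hm1 : m ≤ 1 := le_trans hma.le ha1.le
  have hsq : su ^ 2 ≤ sv ^ 2 := by nlinarith
  have hstep : m * (1 + a) * su ^ 2 ≤ sv * (a * sv + su) := by
    have e1 : m * su ^ 2 ≤ su * sv := by
      calc m * su ^ 2 ≤ 1 * su ^ 2 :=
            mul_le_mul_of_nonneg_right hm1 (sq_nonneg su)
        _ = su * su := by ring
        _ ≤ su * sv := mul_le_mul_of_nonneg_left hle hsu0.le
    have e2 : a * (m * su ^ 2) ≤ a * sv ^ 2 := by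
      refine mul_le_mul_of_nonneg_left ?_ ha0.le
      calc m * su ^ 2 ≤ 1 * su ^ 2 :=
            mul_le_mul_of_nonneg_right hm1 (sq_nonneg su)
        _ = su ^ 2 := by ring
        _ ≤ sv ^ 2 := hsq
    linarith [e1, e2]
  calc 2 * (a * sv - su) * su ^ 3
      = (a * sv - su) * (a * sv + su) * (2 * su ^ 3) / (a * sv + su) := by
        rw [eq_div_iff (ne_of_gt hpos)]; ring
      _ = ε * (1 + a) * m ^ 2 * (2 * su ^ 3) / (a * sv + su) := by rw [hkey]
      _ ≤ 2 * ε * m * (su * sv) := by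
        rw [div_le_iff₀ (by positivity)]
        have hx : (0:ℝ) ≤ 2 * ε * m * su := by positivity
        calc ε * (1 + a) * m ^ 2 * (2 * su ^ 3)
            = (2 * ε * m * su) * (m * (1 + a) * su ^ 2) := by ring
          _ ≤ (2 * ε * m * su) * (sv * (a * sv + su)) :=
              mul_le_mul_of_nonneg_left hstep hx
          _ = 2 * ε * m * (su * sv) * (a * sv + su) := by ring
end

section
/- Suppose energy conservation ε(1-ε)·φ̇₊² + ẏ₊² = ε(1-ε)·φ̇₋² + ẏ₋² holds with φ̇₊ = -φ̇₋ - (2/√(1-y²))·ẏ₋ + r where |r| ≤ C·ε/δ, and assume |φ̇₋| ≤ M, |ẏ₋| ≤ δ, 1 - y² ≥ c·δ, and ε = δ². Then |ẏ₊² - ẏ₋²| ≤ C'·δ^{5/2} for a constant C' depending only on C, M, c. -/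
set_option maxHeartbeats 800000


/-- Energy bookkeeping estimate (7): the change in ẏ² over one light-mass bounce
    is O(δ^{5/2}). -/
theorem energy_bookkeeping (C M c : ℝ) (hC : 0 < C) (hM : 0 < M) (hc : 0 < c) :
    ∃ C' > 0, ∀ ε δ y ydm ydp pdm pdp r : ℝ,
      0 < δ → δ ≤ 1 → ε = δ ^ 2 → 0 < ε → ε < 1 →
      -1 < y → y < 1 → c * δ ≤ 1 - y ^ 2 →
      |pdm| ≤ M → |ydm| ≤ δ → |r| ≤ C * ε / δ →
      pdp = -pdm - (2 / Real.sqrt (1 - y ^ 2)) * ydm + r →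
      ε * (1 - ε) * pdp ^ 2 + ydp ^ 2 = ε * (1 - ε) * pdm ^ 2 + ydm ^ 2 →
      |ydp ^ 2 - ydm ^ 2| ≤ C' * δ ^ ((5 : ℝ) / 2) := by
  have hsc : 0 < Real.sqrt c := Real.sqrt_pos.mpr hc
  refine ⟨(C + 2 / Real.sqrt c) * (2 * M + 2 / Real.sqrt c + C), by positivity, ?_⟩
  intro ε δ y ydm ydp pdm pdp r hδ hδ1 hεδ hε hε1 hy1 hy2 hcy hpdm hydm hr hpdp hE
  have hsδ : 0 < Real.sqrt δ := Real.sqrt_pos.mpr hδ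
  have h1y : (0:ℝ) < 1 - y ^ 2 := lt_of_lt_of_le (by positivity) hcy
  have hS : 0 < Real.sqrt (1 - y ^ 2) := Real.sqrt_pos.mpr h1y
  -- key bound on the sqrt term
  have hSge : Real.sqrt c * Real.sqrt δ ≤ Real.sqrt (1 - y ^ 2) := by
    rw [← Real.sqrt_mul hc.le]
    exact Real.sqrt_le_sqrt hcy
  have hterm : (2 / Real.sqrt (1 - y ^ 2)) * |ydm| ≤ (2 / Real.sqrt c) * Real.sqrt δ := by
    have h1 : (2 / Real.sqrt (1 - y ^ 2)) * |ydm| ≤ (2 / (Real.sqrt c * Real.sqrt δ)) * δ := by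
      gcongr
    have h2 : (2 / (Real.sqrt c * Real.sqrt δ)) * δ = (2 / Real.sqrt c) * Real.sqrt δ := by
      field_simp
      nlinarith [Real.sq_sqrt hδ.le]
    linarith [h1, h2.le]
  have hsδ1 : Real.sqrt δ ≤ 1 := by
    rw [show (1:ℝ) = Real.sqrt 1 by simp]
    exact Real.sqrt_le_sqrt hδ1
  have hδsδ : δ ≤ Real.sqrt δ := by
    nlinarith [Real.sq_sqrt hδ.le, hsδ]
  have hrδ : |r| ≤ C * δ := by
    have : C * ε / δ = C * δ := by rw [hεδ]; field_simp
    linarith [hr, this.le]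
  -- bound on pdm + pdp
  have hsum : |pdm + pdp| ≤ (C + 2 / Real.sqrt c) * Real.sqrt δ := by
    have : pdm + pdp = r - (2 / Real.sqrt (1 - y ^ 2)) * ydm := by rw [hpdp]; ring
    rw [this]
    calc |r - (2 / Real.sqrt (1 - y ^ 2)) * ydm|
        ≤ |r| + |(2 / Real.sqrt (1 - y ^ 2)) * ydm| := abs_sub _ _
      _ ≤ C * δ + (2 / Real.sqrt (1 - y ^ 2)) * |ydm| := by
          rw [abs_mul, abs_of_pos (by positivity : (0:ℝ) < 2 / Real.sqrt (1 - y ^ 2))]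
          linarith
      _ ≤ C * Real.sqrt δ + (2 / Real.sqrt c) * Real.sqrt δ := by
          have : C * δ ≤ C * Real.sqrt δ := by nlinarith
          linarith
      _ = (C + 2 / Real.sqrt c) * Real.sqrt δ := by ring
  -- bound on pdm - pdp
  have hdiff : |pdm - pdp| ≤ 2 * M + 2 / Real.sqrt c + C := by
    have h2 : pdm - pdp = 2 * pdm + (2 / Real.sqrt (1 - y ^ 2)) * ydm - r := by rw [hpdp]; ring
    rw [h2]
    calc |2 * pdm + (2 / Real.sqrt (1 - y ^ 2)) * ydm - r|
        ≤ |2 * pdm| + |(2 / Real.sqrt (1 - y ^ 2)) * ydm| + |r| := by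
          have ha := abs_sub (2 * pdm + (2 / Real.sqrt (1 - y ^ 2)) * ydm) r
          have hb := abs_add_le (2 * pdm) ((2 / Real.sqrt (1 - y ^ 2)) * ydm)
          linarith
      _ ≤ 2 * M + (2 / Real.sqrt c) * Real.sqrt δ + C * δ := by
          rw [abs_mul, abs_mul, abs_of_pos (by positivity : (0:ℝ) < 2 / Real.sqrt (1 - y ^ 2)),
            abs_of_pos (by norm_num : (0:ℝ) < 2)]
          have := hterm
          linarith
      _ ≤ 2 * M + 2 / Real.sqrt c + C := by
          have h3 : (2 / Real.sqrt c) * Real.sqrt δ ≤ 2 / Real.sqrt c :=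
            mul_le_of_le_one_right (by positivity) hsδ1
          nlinarith
  -- main computation
  have hkey : ydp ^ 2 - ydm ^ 2 = ε * (1 - ε) * ((pdm + pdp) * (pdm - pdp)) := by
    nlinarith [hE]
  have hrpow : δ ^ ((5:ℝ)/2) = δ ^ 2 * Real.sqrt δ := by
    rw [Real.sqrt_eq_rpow, show ((5:ℝ)/2) = 2 + 1/2 by norm_num, Real.rpow_add hδ,
      Real.rpow_two]
  rw [hkey, hrpow, abs_mul, abs_mul]
  have hε1' : |1 - ε| ≤ 1 := by rw [abs_of_pos (by linarith)]; linarith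
  have hεabs : |ε| = δ ^ 2 := by rw [hεδ, abs_of_pos (by positivity)]
  calc |ε| * |1 - ε| * |(pdm + pdp) * (pdm - pdp)|
      ≤ δ ^ 2 * 1 * (((C + 2 / Real.sqrt c) * Real.sqrt δ) * (2 * M + 2 / Real.sqrt c + C)) := by
        rw [hεabs, abs_mul]
        apply mul_le_mul
        · apply mul_le_mul_of_nonneg_left hε1' (by positivity)
        · exact mul_le_mul hsum hdiff (abs_nonneg _) (by positivity)
        · positivity
        · positivity
    _ = (C + 2 / Real.sqrt c) * (2 * M + 2 / Real.sqrt c + C) * (δ ^ 2 * Real.sqrt δ) := by ring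
end

section
/- The collision map (ẏ₋, φ̇₋) ↦ (ẏ₊, φ̇₊) given by ẏ₊ = ẏ₋·(-1 + 2β2cos²φ/(β1+β2cos²φ)) - φ̇₋·(2β1β2cos φ/(β1+β2cos²φ)) and φ̇₊ = φ̇₋·(1 - 2β2cos²φ/(β1+β2cos²φ)) - ẏ₋·(2cos φ/(β1+β2cos²φ)) preserves the kinetic energy K = (1/2)ẏ² + (1/2)β1β2·φ̇². -/
/-- The dumbbell collision map preserves the kinetic energy
    K = (1/2)ẏ² + (1/2)β1β2 φ̇². -/
theorem collision_preserves_energy (β1 β2 φ ydm pdm : ℝ)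
    (hβ1 : 0 < β1) (hβ2 : 0 < β2) (hsum : β1 + β2 = 1)
    (hden : 0 < β1 + β2 * Real.cos φ ^ 2) :
    let D := β1 + β2 * Real.cos φ ^ 2
    let ydp := ydm * (-1 + 2 * β2 * Real.cos φ ^ 2 / D)
                 - pdm * (2 * β1 * β2 * Real.cos φ / D)
    let pdp := pdm * (1 - 2 * β2 * Real.cos φ ^ 2 / D)
                 - ydm * (2 * Real.cos φ / D)
    1 / 2 * ydp ^ 2 + 1 / 2 * (β1 * β2) * pdp ^ 2
      = 1 / 2 * ydm ^ 2 + 1 / 2 * (β1 * β2) * pdm ^ 2 := by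
  intro D ydp pdp
  have hD : D ≠ 0 := ne_of_gt hden
  show 1 / 2 * ydp ^ 2 + 1 / 2 * (β1 * β2) * pdp ^ 2
      = 1 / 2 * ydm ^ 2 + 1 / 2 * (β1 * β2) * pdm ^ 2
  simp only [ydp, pdp]
  field_simp
  simp only [D]; ring
end
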